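/- Let C be a type and M a commutative monoid, and consider the monoid algebra 𝓐 = ℝ[Multiset C × M], i.e. the space of finitely supported real-valued functions on Multiset C × M, with convolution product determined on basis elements by e_{(γ,t)} · e_{(δ,s)} = e_{(γ+δ, t·s)}. Suppose f ∈ 𝓐 is supported on pairs whose multiset component has cardinality 1. Then for every pair (γ,t) ∈ Multiset C × M, the sequence n ↦ (1/n!) · fⁿ(γ,t) has at most one nonzero term, namely n = card γ, and for every natural number N ≥ card γ, ∑_{n=0}^{N} (1/n!) · fⁿ(γ,t) = (1/(card γ)!) · f^{card γ}(γ,t). In particular this value is independent of N, so the coefficientwise series exp_⊙(f) = ∑_{n=0}^{∞} (1/n!) fⁿ is well-defined. -/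

import Mathlib

lemma support_pow_card {C M : Type*} [CommMonoid M]
    (f : MonoidAlgebra ℝ (Multiplicative (Multiset C) × M))
    (hf : ∀ p ∈ f.coeff.support, Multiset.card (Multiplicative.toAdd p.1) = 1) :
    ∀ n : ℕ, ∀ p ∈ (f ^ n).coeff.support, Multiset.card (Multiplicative.toAdd p.1) = n := by
  intro n
  induction n with
  | zero =>
    intro p hp
    rw [pow_zero] at hp
    have : p = 1 := Finset.mem_one.mp (MonoidAlgebra.support_coeff_one_subset hp)
    subst this
    simp
  | succ n ih =>
    classical
    intro p hp
    rw [pow_succ] at hp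
    obtain ⟨a, ha, b, hb, rfl⟩ := Finset.mem_mul.mp (MonoidAlgebra.support_coeff_mul_subset _ _ hp)
    have h1 := ih a ha
    have h2 := hf b hb
    simp only [Prod.fst_mul, toAdd_mul, Multiset.card_add, h1, h2]

/-- In the monoid algebra `ℝ[Multiset C × M]`, if `f` is supported on
pairs whose multiset component has cardinality 1, then for every `(γ,t)` the sequence
`n ↦ (1/n!) · fⁿ(γ,t)` has at most one nonzero term, at `n = card γ`, and every
partial sum `∑_{n=0}^{N}` with `N ≥ card γ` equals `(1/(card γ)!) · f^{card γ}(γ,t)`;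
hence the coefficientwise series `exp_⊙(f)` is well-defined. -/
theorem stmt1 {C M : Type*} [CommMonoid M]
    (f : MonoidAlgebra ℝ (Multiplicative (Multiset C) × M))
    (hf : ∀ p ∈ f.coeff.support, Multiset.card (Multiplicative.toAdd p.1) = 1)
    (γ : Multiset C) (t : M) :
    (∀ n : ℕ, n ≠ Multiset.card γ →
        ((Nat.factorial n : ℝ))⁻¹ * (f ^ n).coeff (Multiplicative.ofAdd γ, t) = 0) ∧
    (∀ N : ℕ, Multiset.card γ ≤ N →
        ∑ n ∈ Finset.range (N + 1),
            ((Nat.factorial n : ℝ))⁻¹ * (f ^ n).coeff (Multiplicative.ofAdd γ, t)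
          = ((Nat.factorial (Multiset.card γ) : ℝ))⁻¹ *
              (f ^ Multiset.card γ).coeff (Multiplicative.ofAdd γ, t)) := by
  have key : ∀ n : ℕ, n ≠ Multiset.card γ →
      ((Nat.factorial n : ℝ))⁻¹ * (f ^ n).coeff (Multiplicative.ofAdd γ, t) = 0 := by
    intro n hn
    have : (f ^ n).coeff (Multiplicative.ofAdd γ, t) = 0 := by
      by_contra h
      exact hn ((support_pow_card f hf n _ (Finsupp.mem_support_iff.mpr h)).symm ▸ rfl)
    rw [this, mul_zero]
  refine ⟨key, fun N hN => ?_⟩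
  rw [Finset.sum_eq_single (Multiset.card γ)]
  · intro b hb hne; exact key b hne
  · intro h
    exact absurd (Finset.mem_range.mpr (Nat.lt_succ_of_le hN)) h
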